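/- Let A : Matrix (Fin m) (Fin k) ℝ with A r s ≠ 0, let à be the matrix obtained by pivoting A at (r,s), and let u ∈ ℝ^m, v ∈ ℝ^k. Define ũ from u by replacing its r-th entry with v s, and ṽ from v by replacing its s-th entry with u r. Then u = A.mulVec v if and only if ũ = Ã.mulVec ṽ. -/

import Mathlib

/-- Pivoting a dictionary coefficient matrix at entry `(r, s)`. -/
noncomputable def pivotM {m k : ℕ} (A : Matrix (Fin m) (Fin k) ℝ) (r : Fin m) (s : Fin k) :
    Matrix (Fin m) (Fin k) ℝ :=
  fun i j =>
    if i = r then (if j = s then 1 / A r s else -(A r j) / A r s)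
    else (if j = s then A i s / A r s else A i j - A i s * A r j / A r s)

lemma pivot_fwd {m k : ℕ} (A : Matrix (Fin m) (Fin k) ℝ)
    (r : Fin m) (s : Fin k) (h : A r s ≠ 0) (u : Fin m → ℝ) (v : Fin k → ℝ)
    (hu : u = A.mulVec v) :
    Function.update u r (v s) = (pivotM A r s).mulVec (Function.update v s (u r)) := by
  have hur : u r = A r s * v s + ∑ j ∈ Finset.univ.erase s, A r j * v j := by
    rw [hu]
    simp only [Matrix.mulVec, dotProduct]
    rw [← Finset.add_sum_erase _ _ (Finset.mem_univ s)]
  have hv : ∀ j ∈ Finset.univ.erase s, Function.update v s (u r) j = v j := by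
    intro j hj
    exact Function.update_of_ne (Finset.ne_of_mem_erase hj) _ _
  funext i
  simp only [Matrix.mulVec, dotProduct, pivotM]
  rw [← Finset.add_sum_erase _ _ (Finset.mem_univ s)]
  by_cases hi : i = r
  · subst hi
    simp only [Function.update_self, if_pos rfl, eq_self_iff_true, if_true]
    have e1 : ∑ j ∈ Finset.univ.erase s,
        (if j = s then 1 / A i s else -(A i j) / A i s) * Function.update v s (u i) j
        = -(∑ j ∈ Finset.univ.erase s, A i j * v j) / A i s := by
      rw [show (∑ j ∈ Finset.univ.erase s,
          (if j = s then 1 / A i s else -(A i j) / A i s) * Function.update v s (u i) j)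
          = ∑ j ∈ Finset.univ.erase s, -((A i j * v j) / A i s) from
        Finset.sum_congr rfl fun j hj => by
          rw [hv j hj, if_neg (Finset.ne_of_mem_erase hj)]; ring]
      rw [Finset.sum_neg_distrib, ← Finset.sum_div, ← neg_div]
    rw [e1, hur]
    set T := ∑ j ∈ Finset.univ.erase s, A i j * v j with hT
    field_simp
    ring
  · have hui : u i = A i s * v s + ∑ j ∈ Finset.univ.erase s, A i j * v j := by
      rw [hu]
      simp only [Matrix.mulVec, dotProduct]
      rw [← Finset.add_sum_erase _ _ (Finset.mem_univ s)]
    simp only [Function.update_of_ne hi, if_neg hi, Function.update_self, if_pos rfl]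
    have e1 : ∑ j ∈ Finset.univ.erase s,
        (if j = s then A i s / A r s else A i j - A i s * A r j / A r s) *
          Function.update v s (u r) j
        = (∑ j ∈ Finset.univ.erase s, A i j * v j)
          - (A i s / A r s) * ∑ j ∈ Finset.univ.erase s, A r j * v j := by
      rw [show (∑ j ∈ Finset.univ.erase s,
          (if j = s then A i s / A r s else A i j - A i s * A r j / A r s) *
            Function.update v s (u r) j)
          = ∑ j ∈ Finset.univ.erase s,
              (A i j * v j - (A i s / A r s) * (A r j * v j)) from
        Finset.sum_congr rfl fun j hj => by
          rw [hv j hj, if_neg (Finset.ne_of_mem_erase hj)]; ring]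
      rw [Finset.sum_sub_distrib, ← Finset.mul_sum]
    rw [e1, hur, hui]
    set T := ∑ j ∈ Finset.univ.erase s, A r j * v j with hT
    set P := ∑ j ∈ Finset.univ.erase s, A i j * v j with hP
    field_simp
    simp only [if_true]
    field_simp
    ring

lemma pivot_invol {m k : ℕ} (A : Matrix (Fin m) (Fin k) ℝ)
    (r : Fin m) (s : Fin k) (h : A r s ≠ 0) :
    pivotM (pivotM A r s) r s = A := by
  funext i j
  simp only [pivotM]
  by_cases hi : i = r <;> by_cases hj : j = s <;>
    simp [hi, hj, h] <;> field_simp <;> ring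

/-- Pivoting preserves the solution set of the dictionary `x_B = A x_N`. -/
theorem pivot_preserves_solutions {m k : ℕ} (A : Matrix (Fin m) (Fin k) ℝ)
    (r : Fin m) (s : Fin k) (h : A r s ≠ 0) (u : Fin m → ℝ) (v : Fin k → ℝ) :
    u = A.mulVec v ↔
      Function.update u r (v s) = (pivotM A r s).mulVec (Function.update v s (u r)) := by
  constructor
  · exact pivot_fwd A r s h u v
  · intro h'
    have h2 : pivotM A r s r s ≠ 0 := by
      simp only [pivotM, if_pos rfl]
      exact one_div_ne_zero h
    have := pivot_fwd (pivotM A r s) r s h2 _ _ h'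
    rw [pivot_invol A r s h] at this
    simpa using this
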